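/- Let G be a finite connected graph with at least one edge and let r ≥ 2 be an integer. Let G' be the graph obtained from G by adding, for each edge v_i v_j of G, a new path of length 2r from v_i to v_j whose internal vertices are new and distinct for distinct edges, while keeping the edge v_i v_j (so that each edge of G lies on a cycle of length 2r+1 in G'). Then γ_r(G') = τ(G), and every minimum vertex cover of G is a minimum distance-r dominating set of G'. -/
import Mathlib


/-- `D` is a distance-`r` dominating set of `G`. -/
def IsDrDS {V : Type*} (G : SimpleGraph V) (r : ℕ) (D : Set V) : Prop :=
  ∀ v : V, ∃ u ∈ D, G.Reachable u v ∧ G.dist u v ≤ r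

/-- `γ_r(G)`: the minimum size of a distance-`r` dominating set of `G`. -/
noncomputable def gammaR {V : Type*} (G : SimpleGraph V) (r : ℕ) : ℕ :=
  sInf {n | ∃ D : Set V, IsDrDS G r D ∧ D.ncard = n}

/-- `C` is a vertex cover of `G`. -/
def IsVC {V : Type*} (G : SimpleGraph V) (C : Set V) : Prop :=
  ∀ u v : V, G.Adj u v → u ∈ C ∨ v ∈ C

/-- `τ(G)`: the minimum size of a vertex cover of `G`. -/
noncomputable def tau {V : Type*} (G : SimpleGraph V) : ℕ :=
  sInf {n | ∃ C : Set V, IsVC G C ∧ C.ncard = n}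

/-- Index type for the edges of `G`: each edge is recorded as its ordered pair
of endpoints `(u, v)` with `u < v`. -/
abbrev EdgeIdx {V : Type*} [LinearOrder V] (G : SimpleGraph V) : Type _ :=
  {p : V × V // G.Adj p.1 p.2 ∧ p.1 < p.2}

/-- Vertex type of the graph `G'` obtained from `G` by adding, for each edge
`(u, v)` of `G`, a new `u`–`v` path of length `2r` (with `2r - 1` new internal
vertices), while keeping all edges of `G`. -/
abbrev VPrime {V : Type*} [LinearOrder V] (G : SimpleGraph V) (r : ℕ) : Type _ :=
  V ⊕ (EdgeIdx G × Fin (2 * r - 1))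

/-- The base (one-directional) adjacency relation of `G'`: the original edges of
`G` together with the added paths. -/
def relPrime {V : Type*} [LinearOrder V] (G : SimpleGraph V) (r : ℕ) :
    VPrime G r → VPrime G r → Prop := fun p q =>
  -- the original edges of `G` are kept
  (∃ a b : V, G.Adj a b ∧ p = Sum.inl a ∧ q = Sum.inl b) ∨
  -- first internal vertex of the path added for `e` is adjacent to `e.1`
  (∃ (e : EdgeIdx G) (i : Fin (2 * r - 1)), (i : ℕ) = 0 ∧
      p = Sum.inl e.1.1 ∧ q = Sum.inr (e, i)) ∨
  -- consecutive internal vertices of the path added for `e` are adjacent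
  (∃ (e : EdgeIdx G) (i j : Fin (2 * r - 1)), (j : ℕ) = (i : ℕ) + 1 ∧
      p = Sum.inr (e, i) ∧ q = Sum.inr (e, j)) ∨
  -- last internal vertex of the path added for `e` is adjacent to `e.2`
  (∃ (e : EdgeIdx G) (i : Fin (2 * r - 1)), (i : ℕ) = 2 * r - 2 ∧
      p = Sum.inr (e, i) ∧ q = Sum.inl e.1.2)

/-- The graph `G'` of the construction. -/
def GPrime {V : Type*} [LinearOrder V] (G : SimpleGraph V) (r : ℕ) :
    SimpleGraph (VPrime G r) :=
  SimpleGraph.fromRel (relPrime G r)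


section Aux
variable {V : Type*} [LinearOrder V] {G : SimpleGraph V} {r : ℕ}

lemma adj_orig {a b : V} (h : G.Adj a b) :
    (GPrime G r).Adj (Sum.inl a) (Sum.inl b) := by
  rw [GPrime, SimpleGraph.fromRel_adj]
  exact ⟨by simp [h.ne], Or.inl (Or.inl ⟨a, b, h, rfl, rfl⟩)⟩

lemma adj_start (e : EdgeIdx G) (i : Fin (2*r-1)) (hi : (i:ℕ) = 0) :
    (GPrime G r).Adj (Sum.inl e.1.1) (Sum.inr (e, i)) := by
  rw [GPrime, SimpleGraph.fromRel_adj]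
  exact ⟨by simp, Or.inl (Or.inr (Or.inl ⟨e, i, hi, rfl, rfl⟩))⟩

lemma adj_step (e : EdgeIdx G) (i j : Fin (2*r-1)) (h : (j:ℕ) = (i:ℕ) + 1) :
    (GPrime G r).Adj (Sum.inr (e, i)) (Sum.inr (e, j)) := by
  rw [GPrime, SimpleGraph.fromRel_adj]
  refine ⟨?_, Or.inl (Or.inr (Or.inr (Or.inl ⟨e, i, j, h, rfl, rfl⟩)))⟩
  simp only [ne_eq, Sum.inr.injEq, Prod.mk.injEq, not_and]
  intro _ hij
  rw [hij] at h; omega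

lemma adj_end (e : EdgeIdx G) (i : Fin (2*r-1)) (hi : (i:ℕ) = 2*r-2) :
    (GPrime G r).Adj (Sum.inr (e, i)) (Sum.inl e.1.2) := by
  rw [GPrime, SimpleGraph.fromRel_adj]
  exact ⟨by simp, Or.inl (Or.inr (Or.inr (Or.inr ⟨e, i, hi, rfl, rfl⟩)))⟩

lemma pathWalk (hr : 2 ≤ r) (e : EdgeIdx G) :
    ∀ (i : ℕ) (h : i < 2*r-1),
      ∃ p : (GPrime G r).Walk (Sum.inl e.1.1) (Sum.inr (e, ⟨i, h⟩)), p.length = i + 1 := by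
  intro i
  induction i with
  | zero => exact fun h => ⟨(adj_start e ⟨0, h⟩ rfl).toWalk, rfl⟩
  | succ n ih =>
    intro h
    obtain ⟨p, hp⟩ := ih (by omega)
    exact ⟨p.concat (adj_step e ⟨n, by omega⟩ ⟨n+1, h⟩ rfl),
      by rw [SimpleGraph.Walk.length_concat, hp]⟩

lemma backWalk (hr : 2 ≤ r) (e : EdgeIdx G) :
    ∀ (k i : ℕ) (hk : k ≤ 2*r-2) (hki : i = 2*r-2-k) (h : i < 2*r-1),
      ∃ p : (GPrime G r).Walk (Sum.inl e.1.2) (Sum.inr (e, ⟨i, h⟩)), p.length = k + 1 := by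
  intro k
  induction k with
  | zero =>
    intro i hk hki h
    exact ⟨(adj_end e ⟨i, h⟩ (by simpa using hki)).symm.toWalk, by simp⟩
  | succ n ih =>
    intro i hk hki h
    obtain ⟨p, hp⟩ := ih (i+1) (by omega) (by omega) (by omega)
    exact ⟨p.concat ((adj_step e ⟨i, h⟩ ⟨i+1, by omega⟩ rfl).symm),
      by rw [SimpleGraph.Walk.length_concat, hp]⟩

/-- potential function for the lower bound -/
def pot (e : EdgeIdx G) (r : ℕ) : VPrime G r → ℕ := fun x =>
  match x with
  | Sum.inl w => if w = e.1.1 ∨ w = e.1.2 then r else r + 1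
  | Sum.inr (e', j) => if e' = e then Nat.dist j (r-1) else r + 1

lemma pot_lip (hr : 2 ≤ r) (e : EdgeIdx G) {x y : VPrime G r}
    (h : (GPrime G r).Adj x y) : pot e r y ≤ pot e r x + 1 := by
  rw [GPrime, SimpleGraph.fromRel_adj] at h
  obtain ⟨-, h⟩ := h
  have key : ∀ a b : VPrime G r, relPrime G r a b →
      pot e r b ≤ pot e r a + 1 ∧ pot e r a ≤ pot e r b + 1 := by
    rintro a b (⟨c, d, hcd, rfl, rfl⟩ | ⟨e', i, hi, rfl, rfl⟩ |
      ⟨e', i, j, hij, rfl, rfl⟩ | ⟨e', i, hi, rfl, rfl⟩)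
    · simp only [pot]; split_ifs <;> omega
    · by_cases he : e' = e
      · subst he; simp [pot, Nat.dist, hi]; omega
      · simp only [pot, if_neg he]; split_ifs <;> omega
    · by_cases he : e' = e
      · subst he; simp [pot, Nat.dist, hij]; omega
      · simp only [pot, if_neg he]; omega
    · by_cases he : e' = e
      · subst he; simp [pot, Nat.dist, hi]; omega
      · simp only [pot, if_neg he]; split_ifs <;> omega
  rcases h with h | h
  · exact (key _ _ h).1
  · exact (key _ _ h).2

lemma pot_le_dist (hr : 2 ≤ r) (e : EdgeIdx G) {u v : VPrime G r}
    (h : (GPrime G r).Reachable u v) : pot e r v ≤ pot e r u + (GPrime G r).dist u v := by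
  obtain ⟨p, hp⟩ := h.exists_walk_length_eq_dist
  rw [← hp]; clear hp; clear h
  induction p with
  | nil => simp
  | @cons a b c hadj q ih =>
    have := pot_lip hr e hadj
    rw [SimpleGraph.Walk.length_cons]
    omega

end Aux

section Main
variable {V : Type*} [LinearOrder V] {G : SimpleGraph V} {r : ℕ}

lemma neighbor_exists (hconn : G.Connected) (hedge : ∃ a b : V, G.Adj a b) (w : V) :
    ∃ x, G.Adj w x := by
  obtain ⟨a, b, hab⟩ := hedge
  obtain ⟨p⟩ := hconn w a
  cases p with
  | nil => exact ⟨b, hab⟩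
  | cons h _ => exact ⟨_, h⟩

lemma vc_drds (hr : 2 ≤ r) (hconn : G.Connected) (hedge : ∃ a b : V, G.Adj a b)
    {C : Set V} (hC : IsVC G C) : IsDrDS (GPrime G r) r (Sum.inl '' C) := by
  intro x
  cases x with
  | inl w =>
    obtain ⟨y, hy⟩ := neighbor_exists hconn hedge w
    rcases hC w y hy with h | h
    · exact ⟨Sum.inl w, ⟨w, h, rfl⟩, SimpleGraph.Reachable.refl _,
        by rw [SimpleGraph.dist_self]; omega⟩
    · refine ⟨Sum.inl y, ⟨y, h, rfl⟩, (adj_orig (r := r) hy.symm).reachable, ?_⟩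
      have := SimpleGraph.dist_le (adj_orig (r := r) hy.symm).toWalk
      simp at this
      omega
  | inr z =>
    obtain ⟨e, i⟩ := z
    have hi2 : (i : ℕ) < 2*r-1 := i.2
    rcases hC e.1.1 e.1.2 e.2.1 with h | h
    · by_cases hcase : (i : ℕ) + 1 ≤ r
      · obtain ⟨p, hp⟩ := pathWalk hr e i.1 i.2
        refine ⟨Sum.inl e.1.1, ⟨e.1.1, h, rfl⟩, p.reachable, ?_⟩
        have := SimpleGraph.dist_le p
        simp only [Fin.eta] at this
        omega
      · obtain ⟨q, hq⟩ := backWalk hr e (2*r-2-(i:ℕ)) i.1 (by omega) (by omega) i.2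
        refine ⟨Sum.inl e.1.1, ⟨e.1.1, h, rfl⟩,
          ((adj_orig e.2.1).toWalk.append q).reachable, ?_⟩
        have := SimpleGraph.dist_le ((adj_orig e.2.1).toWalk.append q)
        rw [SimpleGraph.Walk.length_append] at this
        simp only [Fin.eta, SimpleGraph.Walk.length_cons, SimpleGraph.Walk.length_nil] at this
        omega
    · by_cases hcase : r - 1 ≤ (i : ℕ)
      · obtain ⟨q, hq⟩ := backWalk hr e (2*r-2-(i:ℕ)) i.1 (by omega) (by omega) i.2
        refine ⟨Sum.inl e.1.2, ⟨e.1.2, h, rfl⟩, q.reachable, ?_⟩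
        have := SimpleGraph.dist_le q
        simp only [Fin.eta] at this
        omega
      · obtain ⟨p, hp⟩ := pathWalk hr e i.1 i.2
        refine ⟨Sum.inl e.1.2, ⟨e.1.2, h, rfl⟩,
          (((adj_orig e.2.1).symm.toWalk).append p).reachable, ?_⟩
        have := SimpleGraph.dist_le (((adj_orig e.2.1).symm.toWalk).append p)
        rw [SimpleGraph.Walk.length_append] at this
        simp only [Fin.eta, SimpleGraph.Walk.length_cons, SimpleGraph.Walk.length_nil] at this
        omega

/-- the projection used to turn a dominating set into a vertex cover -/
def proj {V : Type*} [LinearOrder V] {G : SimpleGraph V} {r : ℕ} :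
    VPrime G r → V := fun x =>
  match x with
  | Sum.inl w => w
  | Sum.inr (e, _) => e.1.1

lemma dominator_endpoint (hr : 2 ≤ r) {D : Set (VPrime G r)}
    (hD : IsDrDS (GPrime G r) r D) (e : EdgeIdx G) :
    ∃ d ∈ D, proj d = e.1.1 ∨ proj d = e.1.2 := by
  obtain ⟨d, hd, hreach, hdist⟩ := hD (Sum.inr (e, ⟨r-1, by omega⟩))
  have hpot : pot e r d ≤ r := by
    have h1 := pot_le_dist hr e hreach.symm
    have h2 : pot e r (Sum.inr (e, (⟨r-1, by omega⟩ : Fin (2*r-1)))) = 0 := by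
      simp [pot, Nat.dist]
    rw [SimpleGraph.dist_comm] at h1
    omega
  refine ⟨d, hd, ?_⟩
  cases d with
  | inl w =>
    simp only [pot] at hpot
    by_cases hw : w = e.1.1 ∨ w = e.1.2
    · rcases hw with hw | hw
      · exact Or.inl hw
      · exact Or.inr hw
    · rw [if_neg hw] at hpot; omega
  | inr z =>
    obtain ⟨e', j⟩ := z
    simp only [pot] at hpot
    by_cases he : e' = e
    · subst he; exact Or.inl rfl
    · rw [if_neg he] at hpot; omega

lemma drds_vc [Fintype V] (hr : 2 ≤ r) {D : Set (VPrime G r)}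
    (hD : IsDrDS (GPrime G r) r D) :
    ∃ C : Set V, IsVC G C ∧ C.ncard ≤ D.ncard := by
  refine ⟨proj '' D, ?_, Set.ncard_image_le (Set.toFinite D)⟩
  intro a b hab
  rcases lt_trichotomy a b with h | h | h
  · obtain ⟨d, hd, hde⟩ := dominator_endpoint hr hD ⟨(a, b), hab, h⟩
    rcases hde with hde | hde
    · exact Or.inl ⟨d, hd, hde⟩
    · exact Or.inr ⟨d, hd, hde⟩
  · exact absurd h hab.ne
  · obtain ⟨d, hd, hde⟩ := dominator_endpoint hr hD ⟨(b, a), hab.symm, h⟩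
    rcases hde with hde | hde
    · exact Or.inr ⟨d, hd, hde⟩
    · exact Or.inl ⟨d, hd, hde⟩

end Main

theorem stmt18 {V : Type*} [Fintype V] [LinearOrder V] (G : SimpleGraph V)
    (hconn : G.Connected) (hedge : ∃ a b : V, G.Adj a b)
    (r : ℕ) (hr : 2 ≤ r) :
    gammaR (GPrime G r) r = tau G ∧
    ∀ C : Set V, IsVC G C → C.ncard = tau G →
      IsDrDS (GPrime G r) r (Sum.inl '' C) ∧
      (Sum.inl '' C : Set (VPrime G r)).ncard = gammaR (GPrime G r) r := by
  classical
  have hVCne : {n | ∃ C : Set V, IsVC G C ∧ C.ncard = n}.Nonempty :=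
    ⟨(Set.univ : Set V).ncard, Set.univ, fun u v _ => Or.inl trivial, rfl⟩
  have htau_mem : ∃ C₀ : Set V, IsVC G C₀ ∧ C₀.ncard = tau G := by
    rw [tau]; exact Nat.sInf_mem hVCne
  obtain ⟨C₀, hC₀, hcard₀⟩ := htau_mem
  have hDne : {n | ∃ D : Set (VPrime G r), IsDrDS (GPrime G r) r D ∧ D.ncard = n}.Nonempty :=
    ⟨_, Sum.inl '' (Set.univ : Set V),
      vc_drds hr hconn hedge (fun u v _ => Or.inl trivial), rfl⟩
  have hgamma_mem : ∃ D₀ : Set (VPrime G r), IsDrDS (GPrime G r) r D₀ ∧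
      D₀.ncard = gammaR (GPrime G r) r := by
    rw [gammaR]; exact Nat.sInf_mem hDne
  obtain ⟨D₀, hD₀, hDcard₀⟩ := hgamma_mem
  have h1 : gammaR (GPrime G r) r ≤ tau G := by
    rw [gammaR]
    refine Nat.sInf_le ⟨Sum.inl '' C₀, vc_drds hr hconn hedge hC₀, ?_⟩
    rw [Set.ncard_image_of_injective _ Sum.inl_injective, hcard₀]
  have h2 : tau G ≤ gammaR (GPrime G r) r := by
    obtain ⟨C', hC', hle⟩ := drds_vc hr hD₀
    have : tau G ≤ C'.ncard := by rw [tau]; exact Nat.sInf_le ⟨C', hC', rfl⟩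
    omega
  have heq : gammaR (GPrime G r) r = tau G := le_antisymm h1 h2
  refine ⟨heq, fun C hC hcard => ⟨vc_drds hr hconn hedge hC, ?_⟩⟩
  rw [Set.ncard_image_of_injective _ Sum.inl_injective, hcard, heq]
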